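/- Upper bound for functional separation: for log-concave f, g ∈ LC_g(ℝⁿ) and every p > 1, M(f, g) ≤ (∫ (f⋆g^{p−1})(x) dx) / (∫ g^p(x) dx), where ⋆ is sup-convolution and M(f,g) is the separation number with weight h ≡ 1. -/

import Mathlib

open MeasureTheory ENNReal NNReal

noncomputable section

/-- The ambient space `ℝⁿ`. -/
abbrev Vn (n : ℕ) := EuclideanSpace ℝ (Fin n)

/-- Convolution of a (nonnegative Borel) measure with a `[0,∞]`-valued function:
`(μ * g)(x) = ∫ g(x - t) dμ(t)`. -/
def mconv {n : ℕ} (μ : Measure (Vn n)) (g : Vn n → ℝ≥0∞) (x : Vn n) : ℝ≥0∞ :=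
  ∫⁻ t, g (x - t) ∂μ

/-- `μ` is a covering measure of `f` by `g` : `μ * g ≥ f` pointwise. -/
def Covers {n : ℕ} (μ : Measure (Vn n)) (g f : Vn n → ℝ≥0∞) : Prop :=
  ∀ x, f x ≤ mconv μ g x

/-- `ρ` is a `g`-separated measure with respect to `h` : `ρ * g ≤ h` pointwise. -/
def Separated {n : ℕ} (ρ : Measure (Vn n)) (g h : Vn n → ℝ≥0∞) : Prop :=
  ∀ x, mconv ρ g x ≤ h x

/-- The `h`-covering number of `f` by `g`:
`N(f,g,h) = inf {∫ h dμ : μ * g ≥ f}`. -/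
def covN {n : ℕ} (f g h : Vn n → ℝ≥0∞) : ℝ≥0∞ :=
  ⨅ μ : {μ : Measure (Vn n) // Covers μ g f}, ∫⁻ x, h x ∂μ.1

/-- The `h`-separation number of `f` by `g`:
`M(f,g,h) = sup {∫ f dρ : ρ * g ≤ h}`. -/
def sepM {n : ℕ} (f g h : Vn n → ℝ≥0∞) : ℝ≥0∞ :=
  ⨆ ρ : {ρ : Measure (Vn n) // Separated ρ g h}, ∫⁻ x, f x ∂ρ.1

/-- Geometric log-concave functions: upper semicontinuous, `0 ≤ f ≤ 1`,
`f(0) = max f = 1`, log-concave, with finite positive integral. -/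
structure IsLCg {n : ℕ} (f : Vn n → ℝ) : Prop where
  usc : UpperSemicontinuous f
  nonneg : ∀ x, 0 ≤ f x
  le_one : ∀ x, f x ≤ 1
  at_zero : f 0 = 1
  logconcave : ∀ x y : Vn n, ∀ t : ℝ, 0 ≤ t → t ≤ 1 →
    f x ^ t * f y ^ (1 - t) ≤ f (t • x + (1 - t) • y)
  int_pos : 0 < ∫⁻ x, ENNReal.ofReal (f x)
  int_fin : ∫⁻ x, ENNReal.ofReal (f x) < ∞


/-- Upper bound for separation: for `f, g ∈ LC_g(ℝⁿ)` and `p > 1`,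
`M(f, g) ≤ (∫ (f ⋆ g^{p-1})) / (∫ g^p)`, where `⋆` is sup-convolution. -/
lemma IsLCg.exists_ball {n : ℕ} {g : Vn n → ℝ} (hg : IsLCg g) :
    ∃ ε : ℝ, 0 < ε ∧ ∃ (x₀ : Vn n) (r : ℝ), 0 < r ∧ ∀ y ∈ Metric.ball x₀ r, ε ≤ g y := by
  -- step 1: some superlevel set has positive measure
  obtain ⟨ε, hε, hpos⟩ : ∃ ε : ℝ, 0 < ε ∧ 0 < volume {x | ε ≤ g x} := by
    by_contra h
    push_neg at h
    have hnull : ∀ ε : ℝ, 0 < ε → volume {x | ε ≤ g x} = 0 := fun ε hε =>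
      le_antisymm (h ε hε) zero_le
    have hU : volume {x | 0 < g x} = 0 := by
      refine measure_mono_null (fun x hx => ?_)
        (measure_iUnion_null (s := fun k : ℕ => {x | 1/((k:ℝ)+1) ≤ g x})
          fun k => hnull _ (by positivity))
      obtain ⟨k, hk⟩ := exists_nat_one_div_lt (K := ℝ) hx
      exact Set.mem_iUnion.2 ⟨k, hk.le⟩
    have hae : ∀ᵐ x : Vn n, g x ≤ 0 := by
      rw [ae_iff]; simpa [not_le] using hU
    have hzero : ∫⁻ x, ENNReal.ofReal (g x) = 0 := by
      have := lintegral_congr_ae (μ := (volume : Measure (Vn n)))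
        (f := fun x => ENNReal.ofReal (g x)) (g := fun _ => 0)
        (hae.mono fun x hx => by simp [ENNReal.ofReal_eq_zero.2 hx])
      simpa using this
    exact absurd hzero (ne_of_gt hg.int_pos)
  set S : Set (Vn n) := {x | ε ≤ g x} with hS
  have hconv : Convex ℝ S := by
    intro x hx y hy a b ha hb hab
    have hb' : b = 1 - a := by linarith
    subst hb'
    have h1 : ε ^ a * ε ^ (1 - a) = ε := by
      rw [← Real.rpow_add hε]
      norm_num
    have h2 : ε ^ a * ε ^ (1-a) ≤ g x ^ a * g y ^ (1-a) :=
      mul_le_mul (Real.rpow_le_rpow hε.le hx ha) (Real.rpow_le_rpow hε.le hy (by linarith))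
        (Real.rpow_nonneg hε.le _) (Real.rpow_nonneg (hg.nonneg x) _)
    have h3 := hg.logconcave x y a ha (by linarith)
    exact le_trans (le_trans h1.symm.le h2) h3
  have hint : (interior S).Nonempty := by
    by_contra hemp
    rw [Set.not_nonempty_iff_eq_empty] at hemp
    have hspan : affineSpan ℝ S ≠ ⊤ := by
      intro htop
      have := hconv.interior_nonempty_iff_affineSpan_eq_top.2 htop
      rw [hemp] at this
      exact Set.not_nonempty_empty this
    have : volume S = 0 :=
      measure_mono_null (subset_affineSpan ℝ S)
        (MeasureTheory.Measure.addHaar_affineSubspace _ _ hspan)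
    exact absurd this (ne_of_gt hpos)
  obtain ⟨x₀, hx₀⟩ := hint
  obtain ⟨r, hr, hball⟩ := Metric.mem_nhds_iff.1 (mem_interior_iff_mem_nhds.1 hx₀)
  exact ⟨ε, hε, x₀, r, hr, fun y hy => hball hy⟩

lemma sep_sigmaFinite {n : ℕ} {g : Vn n → ℝ} (hg : IsLCg g)
    (ρ : Measure (Vn n)) (hgm : Measurable g)
    (hρ : Separated ρ (fun x => ENNReal.ofReal (g x)) (fun _ => 1)) :
    SigmaFinite ρ := by
  obtain ⟨ε, hε, x₀, r, hr, hball⟩ := hg.exists_ball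
  have hfin : ∀ x : Vn n, ρ (Metric.ball x r) < ∞ := by
    intro x
    have h1 : ENNReal.ofReal ε * ρ (Metric.ball x r) ≤ 1 := by
      calc ENNReal.ofReal ε * ρ (Metric.ball x r)
          = ∫⁻ _ in Metric.ball x r, ENNReal.ofReal ε ∂ρ := (setLIntegral_const _ _).symm
        _ ≤ ∫⁻ t in Metric.ball x r, ENNReal.ofReal (g ((x + x₀) - t)) ∂ρ := by
            refine setLIntegral_mono' measurableSet_ball fun t ht => ?_
            refine ENNReal.ofReal_le_ofReal (hball _ ?_)
            have heq : (x + x₀) - t - x₀ = x - t := by abel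
            rw [Metric.mem_ball, dist_eq_norm, heq, ← dist_eq_norm]
            rwa [Metric.mem_ball, dist_comm] at ht
        _ ≤ ∫⁻ t, ENNReal.ofReal (g ((x + x₀) - t)) ∂ρ :=
            lintegral_mono' Measure.restrict_le_self le_rfl
        _ ≤ 1 := hρ (x + x₀)
    by_contra hcon
    rw [not_lt, top_le_iff] at hcon
    rw [hcon, ENNReal.mul_top (ne_of_gt (ENNReal.ofReal_pos.2 hε))] at h1
    exact absurd h1 (by simp)
  let u := TopologicalSpace.denseSeq (Vn n)
  refine ⟨⟨⟨fun k => Metric.ball (u k) r, fun _ => Set.mem_univ _, fun k => hfin _, ?_⟩⟩⟩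
  refine Set.eq_univ_iff_forall.2 fun x => ?_
  obtain ⟨k, hk⟩ := (TopologicalSpace.denseRange_denseSeq (Vn n)).exists_dist_lt x hr
  exact Set.mem_iUnion.2 ⟨k, Metric.mem_ball.2 (by simpa [u, dist_comm] using hk)⟩

theorem sepM_upper_bound {n : ℕ} (f g : Vn n → ℝ) (hf : IsLCg f) (hg : IsLCg g)
    (p : ℝ) (hp : 1 < p) :
    sepM (fun x => ENNReal.ofReal (f x)) (fun x => ENNReal.ofReal (g x)) (fun _ => 1) ≤
      (∫⁻ x, ⨆ z, ENNReal.ofReal (f z * g (x - z) ^ (p - 1))) /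
        ∫⁻ x, ENNReal.ofReal (g x ^ p) := by
  have hfm : Measurable f := hf.usc.measurable
  have hgm : Measurable g := hg.usc.measurable
  have hp0 : (0:ℝ) < p := lt_trans zero_lt_one hp
  set F : Vn n → ℝ≥0∞ := fun x => ⨆ z, ENNReal.ofReal (f z * g (x - z) ^ (p - 1)) with hFdef
  have hFge : ∀ x, ENNReal.ofReal (f x) ≤ F x := by
    intro x
    have h := le_iSup (fun z => ENNReal.ofReal (f z * g (x - z) ^ (p - 1))) x
    simpa [sub_self, hg.at_zero, Real.one_rpow] using h
  have hFle : ∀ x, F x ≤ 1 := by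
    intro x
    refine iSup_le fun z => ?_
    rw [show (1:ℝ≥0∞) = ENNReal.ofReal 1 by simp]
    refine ENNReal.ofReal_le_ofReal ?_
    calc f z * g (x - z) ^ (p - 1) ≤ 1 * 1 :=
          mul_le_mul (hf.le_one z)
            (Real.rpow_le_one (hg.nonneg _) (hg.le_one _) (by linarith))
            (Real.rpow_nonneg (hg.nonneg _) _) zero_le_one
      _ = 1 := by ring
  have hA0 : (∫⁻ x, F x) ≠ 0 :=
    (lt_of_lt_of_le hf.int_pos (lintegral_mono hFge)).ne'
  have hBfin : (∫⁻ x, ENNReal.ofReal (g x ^ p)) ≠ ∞ := by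
    refine ne_of_lt (lt_of_le_of_lt (lintegral_mono fun x => ?_) hg.int_fin)
    refine ENNReal.ofReal_le_ofReal ?_
    rcases eq_or_lt_of_le (hg.nonneg x) with h0 | h0
    · rw [← h0, Real.zero_rpow (ne_of_gt hp0)]
    · calc g x ^ p ≤ g x ^ (1:ℝ) :=
            Real.rpow_le_rpow_of_exponent_ge h0 (hg.le_one x) hp.le
        _ = g x := Real.rpow_one _
  rw [sepM]
  refine iSup_le fun ρs => ?_
  obtain ⟨ρ, hρ⟩ := ρs
  haveI : SigmaFinite ρ := sep_sigmaFinite hg ρ hgm hρ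
  rw [ENNReal.le_div_iff_mul_le (Or.inr hA0) (Or.inl hBfin)]
  have hGm : Measurable fun s : Vn n => ENNReal.ofReal (g s ^ p) :=
    ENNReal.measurable_ofReal.comp ((Real.continuous_rpow_const hp0.le).measurable.comp hgm)
  have hmeas : AEMeasurable
      (Function.uncurry fun t x : Vn n => ENNReal.ofReal (f t) * ENNReal.ofReal (g (x - t) ^ p))
      (ρ.prod volume) := by
    refine Measurable.aemeasurable ?_
    exact ((ENNReal.measurable_ofReal.comp (hfm.comp measurable_fst)).mul
      (hGm.comp (measurable_snd.sub measurable_fst)))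
  calc (∫⁻ t, ENNReal.ofReal (f t) ∂ρ) * ∫⁻ x, ENNReal.ofReal (g x ^ p)
      = ∫⁻ t, (ENNReal.ofReal (f t) * ∫⁻ x, ENNReal.ofReal (g x ^ p)) ∂ρ :=
        (lintegral_mul_const' _ _ hBfin).symm
    _ = ∫⁻ t, (∫⁻ x, ENNReal.ofReal (f t) * ENNReal.ofReal (g x ^ p) ∂volume) ∂ρ :=
        lintegral_congr fun t =>
          (lintegral_const_mul' _ _ ENNReal.ofReal_ne_top).symm
    _ = ∫⁻ t, (∫⁻ x, ENNReal.ofReal (f t) * ENNReal.ofReal (g (x - t) ^ p) ∂volume) ∂ρ :=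
        lintegral_congr fun t =>
          (lintegral_sub_right_eq_self
            (fun x => ENNReal.ofReal (f t) * ENNReal.ofReal (g x ^ p)) t).symm
    _ = ∫⁻ x, (∫⁻ t, ENNReal.ofReal (f t) * ENNReal.ofReal (g (x - t) ^ p) ∂ρ) ∂volume :=
        lintegral_lintegral_swap hmeas
    _ ≤ ∫⁻ x, F x := by
        refine lintegral_mono fun x => ?_
        have key : ∀ t, ENNReal.ofReal (f t) * ENNReal.ofReal (g (x - t) ^ p) ≤
            F x * ENNReal.ofReal (g (x - t)) := by
          intro t
          have h1 : g (x - t) ^ p = g (x - t) ^ (p - 1) * g (x - t) := by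
            rw [show p = (p - 1) + 1 by ring, Real.rpow_add' (hg.nonneg _) (by linarith),
              Real.rpow_one]
            ring_nf
          rw [h1, ENNReal.ofReal_mul (Real.rpow_nonneg (hg.nonneg _) _), ← mul_assoc,
            ← ENNReal.ofReal_mul (hf.nonneg t)]
          exact mul_le_mul_left
            (le_iSup (fun z => ENNReal.ofReal (f z * g (x - z) ^ (p - 1))) t) _
        calc ∫⁻ t, ENNReal.ofReal (f t) * ENNReal.ofReal (g (x - t) ^ p) ∂ρ
            ≤ ∫⁻ t, F x * ENNReal.ofReal (g (x - t)) ∂ρ := lintegral_mono key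
          _ = F x * ∫⁻ t, ENNReal.ofReal (g (x - t)) ∂ρ :=
              lintegral_const_mul' _ _ (ne_of_lt (lt_of_le_of_lt (hFle x) (by simp)))
          _ ≤ F x * 1 := mul_le_mul_right (hρ x) _
          _ = F x := mul_one _
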